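/- arXiv:0712.4005 — 5 statements merged into one kernel-verified Lean document; each statement's English description precedes it below -/
import Mathlib

section
/- For every subexponential function F : ℕ → ℝ (i.e. F positive and lim_{n→∞} (log F(n))/n = 0), there exists a function G : ℝ≥0 → ℝ with G ≥ F on ℕ, log G concave, and lim_{x→∞} (log G(x))/x = 0. -/
open Filter

/-- For every subexponential function `F : ℕ → ℝ` (positive with `log F(n) / n → 0`),
there is a majorant `G` on the nonnegative reals with `log G` concave and
`log G(x) / x → 0`. -/
theorem exists_log_concave_subexponential_majorant
    (F : ℕ → ℝ) (hFpos : ∀ n, 0 < F n)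
    (hF : Tendsto (fun n : ℕ => Real.log (F n) / n) atTop (nhds 0)) :
    ∃ G : ℝ → ℝ,
      (∀ n : ℕ, F n ≤ G n) ∧
      ConcaveOn ℝ (Set.Ici (0 : ℝ)) (fun x => Real.log (G x)) ∧
      Tendsto (fun x : ℝ => Real.log (G x) / x) atTop (nhds 0) := by
  -- the set of values of affine majorant lines (with nonneg slope) at the point x
  set S : ℝ → Set ℝ := fun x =>
    {y | ∃ a b : ℝ, 0 ≤ a ∧ (∀ n : ℕ, Real.log (F n) ≤ a * n + b) ∧ y = a * x + b} with hS
  -- for every positive slope there is a majorant line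
  have key : ∀ a : ℝ, 0 < a → ∃ b : ℝ, ∀ n : ℕ, Real.log (F n) ≤ a * n + b := by
    intro a ha
    have hev : ∀ᶠ n : ℕ in atTop, Real.log (F n) / n < a := hF.eventually_lt_const ha
    obtain ⟨N, hN⟩ := eventually_atTop.1 hev
    set M := max N 1 with hM
    refine ⟨max 0 ((Finset.range (M + 1)).sup' (by simp) fun n => Real.log (F n)), fun n => ?_⟩
    rcases le_or_gt n M with hn | hn
    · have h1 : Real.log (F n) ≤ (Finset.range (M + 1)).sup' (by simp) fun n => Real.log (F n) :=
        Finset.le_sup' (fun n => Real.log (F n)) (Finset.mem_range.mpr (Nat.lt_succ_of_le hn))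
      have h2 : 0 ≤ a * n := by positivity
      have h3 : ((Finset.range (M + 1)).sup' (by simp) fun n => Real.log (F n)) ≤
          max 0 ((Finset.range (M + 1)).sup' (by simp) fun n => Real.log (F n)) := le_max_right _ _
      linarith
    · have hn1 : 1 ≤ n := by omega
      have hnpos : (0 : ℝ) < n := by exact_mod_cast Nat.lt_of_lt_of_le Nat.zero_lt_one hn1
      have h1 : Real.log (F n) / n < a := hN n (by omega)
      have h2 : Real.log (F n) < a * n := by
        rw [div_lt_iff₀ hnpos] at h1; linarith
      have h3 : (0:ℝ) ≤ max 0 ((Finset.range (M + 1)).sup' (by simp) fun n => Real.log (F n)) :=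
        le_max_left _ _
      linarith
  -- lower bound on S x for x ≥ 0
  have hlb : ∀ x : ℝ, 0 ≤ x → ∀ z ∈ S x, Real.log (F 0) ≤ z := by
    rintro x hx z ⟨a, b, ha, hab, rfl⟩
    have h0 : Real.log (F 0) ≤ a * (0 : ℕ) + b := hab 0
    simp at h0
    nlinarith
  have hbdd : ∀ x : ℝ, 0 ≤ x → BddBelow (S x) := fun x hx => ⟨_, hlb x hx⟩
  have hne : ∀ x : ℝ, (S x).Nonempty := by
    intro x
    obtain ⟨b, hb⟩ := key 1 one_pos
    exact ⟨1 * x + b, 1, b, zero_le_one, hb, rfl⟩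
  refine ⟨fun x => Real.exp (sInf (S x)), ?_, ?_, ?_⟩
  · intro n
    rw [← Real.exp_log (hFpos n)]
    exact Real.exp_le_exp.mpr (le_csInf (hne _) fun z hz => by
      obtain ⟨a, b, ha, hab, rfl⟩ := hz; exact hab n)
  · simp only [Real.log_exp]
    refine ⟨convex_Ici 0, ?_⟩
    intro x hx y hy a b ha hb hab
    have hxy : (0:ℝ) ≤ a * x + b * y := by
      have := Set.mem_Ici.1 hx; have := Set.mem_Ici.1 hy; positivity
    refine le_csInf (hne _) ?_
    rintro z ⟨c, d, hc, hcd, rfl⟩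
    have h1 : sInf (S x) ≤ c * x + d := csInf_le (hbdd x hx) ⟨c, d, hc, hcd, rfl⟩
    have h2 : sInf (S y) ≤ c * y + d := csInf_le (hbdd y hy) ⟨c, d, hc, hcd, rfl⟩
    have : a * sInf (S x) + b * sInf (S y) ≤ a * (c * x + d) + b * (c * y + d) := by
      have := mul_le_mul_of_nonneg_left h1 ha
      have := mul_le_mul_of_nonneg_left h2 hb
      linarith
    calc a • sInf (S x) + b • sInf (S y) = a * sInf (S x) + b * sInf (S y) := by
          simp [smul_eq_mul]
      _ ≤ a * (c * x + d) + b * (c * y + d) := this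
      _ = c * (a * x + b * y) + (a + b) * d := by ring
      _ = c * (a * x + b * y) + d := by rw [hab, one_mul]
  · simp only [Real.log_exp]
    rw [tendsto_order]
    constructor
    · intro a ha
      have h1 : Tendsto (fun x : ℝ => Real.log (F 0) / x) atTop (nhds 0) :=
        tendsto_const_nhds.div_atTop tendsto_id
      filter_upwards [h1.eventually_const_lt ha, eventually_gt_atTop (0:ℝ)] with x hx1 hx0
      have h2 : Real.log (F 0) ≤ sInf (S x) := le_csInf (hne x) (hlb x hx0.le)
      calc a < Real.log (F 0) / x := hx1
        _ ≤ sInf (S x) / x := by gcongr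

    · intro ε hε
      obtain ⟨b, hb⟩ := key (ε / 2) (by positivity)
      filter_upwards [eventually_gt_atTop (max 0 (2 * b / ε))] with x hx
      have hx0 : 0 < x := lt_of_le_of_lt (le_max_left _ _) hx
      have hxb : 2 * b / ε < x := lt_of_le_of_lt (le_max_right _ _) hx
      have h1 : sInf (S x) ≤ ε / 2 * x + b :=
        csInf_le (hbdd x hx0.le) ⟨ε / 2, b, by positivity, hb, rfl⟩
      rw [div_lt_iff₀ hx0]
      have hbx : b < ε / 2 * x := by
        rw [div_lt_iff₀ hε] at hxb; nlinarith
      linarith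
end

section
/- Let λ(n) = n log log n / log n and, for fixed constants d ≥ 2 and m ≥ 1 with A = d^m, define f(n) = (log n)/(n (log log n)²) + A(log n)²/(n(log log n)²) + ((n−λ(n))/n) · (log n / log((n−λ(n))/A)) · (log log((n−λ(n))/A) / log log n)². Then there exists N such that f(n) ≤ 1 for all n ≥ N. -/
/-- `λ(x) = x log log x / log x`. -/
noncomputable def lamFG (x : ℝ) : ℝ := x * Real.log (Real.log x) / Real.log x

open Filter Real

set_option maxHeartbeats 1000000 in
lemma fg_key (A y : ℝ) (hA : 2 ≤ A)
    (h1 : 1 ≤ Real.log (Real.log y))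
    (h2 : 4 * Real.log A ≤ Real.log (Real.log y))
    (h3 : Real.log (Real.log y) ≤ Real.log y / 8)
    (h4 : 8 * A * (Real.log y) ^ 3 ≤ y) :
    Real.log y / (y * (Real.log (Real.log y)) ^ 2)
      + A * (Real.log y) ^ 2 / (y * (Real.log (Real.log y)) ^ 2)
      + ((y - lamFG y) / y) * (Real.log y / Real.log ((y - lamFG y) / A))
          * (Real.log (Real.log ((y - lamFG y) / A)) / Real.log (Real.log y)) ^ 2
      ≤ 1 := by
  set L := Real.log y with hLdef
  set l := Real.log L with hldef
  clear_value l L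
  have hA0 : (0:ℝ) < A := by linarith
  have ha : 0 < Real.log A := Real.log_pos (by linarith)
  have hL8 : 8 ≤ L := by nlinarith
  have hL0 : 0 < L := by linarith
  have hy : 0 < y := lt_of_lt_of_le (by positivity) h4
  have hlL : l ≤ L / 8 := h3
  have hll : 0 < L - l := by linarith
  have hl0 : 0 < l := by linarith
  have hyl : y - lamFG y = y * ((L - l) / L) := by
    simp only [lamFG, ← hLdef, ← hldef]
    field_simp
  have hu0 : 0 < (L - l) / L := by positivity
  have hx0 : 0 < y - lamFG y := by rw [hyl]; positivity
  -- log of x := (y - lamFG y)/A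
  have hlogx : Real.log ((y - lamFG y) / A) = L + Real.log ((L - l) / L) - Real.log A := by
    rw [hyl, Real.log_div (by positivity) (by positivity),
      Real.log_mul (by positivity) (by positivity), ← hLdef]
  have hc1 : Real.log ((L - l) / L) ≤ 0 :=
    Real.log_nonpos (le_of_lt hu0) (by rw [div_le_one hL0]; linarith)
  have hc2 : -(l / 4) ≤ Real.log ((L - l) / L) := by
    have h := Real.log_le_sub_one_of_pos (show 0 < L / (L - l) by positivity)
    have hinv : Real.log (L / (L - l)) = - Real.log ((L - l) / L) := by
      rw [← Real.log_inv]; congr 1; field_simp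
    have hq : L / (L - l) - 1 = l / (L - l) := by field_simp; ring
    have hq2 : l / (L - l) ≤ l / 4 := by
      apply div_le_div_of_nonneg_left (le_of_lt hl0) (by norm_num) ?_ |>.trans_eq rfl
      linarith
    rw [hinv, hq] at h
    linarith
  have ha4 : Real.log A ≤ l / 4 := by linarith
  have hx1 : L - l / 2 ≤ Real.log ((y - lamFG y) / A) := by rw [hlogx]; linarith
  have hx2 : Real.log ((y - lamFG y) / A) ≤ L := by rw [hlogx]; linarith
  have hxge2 : (2:ℝ) ≤ Real.log ((y - lamFG y) / A) := by
    have : L - l / 2 ≥ 15 * L / 16 := by linarith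
    linarith
  have hlx0 : 0 < Real.log ((y - lamFG y) / A) := by linarith
  have hllx0 : 0 < Real.log (Real.log ((y - lamFG y) / A)) :=
    Real.log_pos (by linarith)
  have hllx1 : Real.log (Real.log ((y - lamFG y) / A)) ≤ l := by
    rw [hldef]; exact Real.log_le_log hlx0 hx2
  have hr : (Real.log (Real.log ((y - lamFG y) / A)) / l) ^ 2 ≤ 1 := by
    have : Real.log (Real.log ((y - lamFG y) / A)) / l ≤ 1 := by
      rw [div_le_one hl0]; exact hllx1
    nlinarith [hllx0.le, hl0.le, div_nonneg hllx0.le hl0.le]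
  -- third term bound
  have hfrac : (y - lamFG y) / y = (L - l) / L := by
    rw [hyl]; field_simp
  have hT3 : ((y - lamFG y) / y) * (L / Real.log ((y - lamFG y) / A))
      * (Real.log (Real.log ((y - lamFG y) / A)) / l) ^ 2 ≤ 1 - l / (2 * L) := by
    have step1 : ((y - lamFG y) / y) * (L / Real.log ((y - lamFG y) / A))
        * (Real.log (Real.log ((y - lamFG y) / A)) / l) ^ 2
        ≤ ((y - lamFG y) / y) * (L / Real.log ((y - lamFG y) / A)) * 1 := by
      apply mul_le_mul_of_nonneg_left hr
      rw [hfrac]; positivity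
    have step2 : ((y - lamFG y) / y) * (L / Real.log ((y - lamFG y) / A)) * 1
        = (L - l) / L * (L / Real.log ((y - lamFG y) / A)) := by
      rw [hfrac]; ring
    have step3 : (L - l) / L * (L / Real.log ((y - lamFG y) / A))
        = (L - l) / Real.log ((y - lamFG y) / A) := by
      field_simp
    have step4 : (L - l) / Real.log ((y - lamFG y) / A) ≤ (L - l) / (L - l / 2) := by
      apply div_le_div_of_nonneg_left hll.le (by linarith) hx1
    have step5 : (L - l) / (L - l / 2) ≤ 1 - l / (2 * L) := by
      rw [div_le_iff₀ (by linarith)]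
      have : 1 - l / (2 * L) = (2 * L - l) / (2 * L) := by field_simp
      rw [this, div_mul_eq_mul_div, le_div_iff₀ (by linarith)]
      nlinarith
    calc ((y - lamFG y) / y) * (L / Real.log ((y - lamFG y) / A))
        * (Real.log (Real.log ((y - lamFG y) / A)) / l) ^ 2
        ≤ (L - l) / Real.log ((y - lamFG y) / A) := by
          rw [← step3, ← step2]; exact step1
      _ ≤ (L - l) / (L - l / 2) := step4
      _ ≤ 1 - l / (2 * L) := step5
  -- first two terms
  have hT12 : L / (y * l ^ 2) + A * L ^ 2 / (y * l ^ 2) ≤ l / (2 * L) := by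
    have e1 : L / (y * l ^ 2) + A * L ^ 2 / (y * l ^ 2) = (L + A * L ^ 2) / (y * l ^ 2) := by
      ring
    rw [e1, div_le_div_iff₀ (by positivity) (by positivity)]
    have k1 : (L + A * L ^ 2) * (2 * L) ≤ 8 * A * L ^ 3 := by
      nlinarith [mul_nonneg (by linarith : (0:ℝ) ≤ A - 2) (pow_pos hL0 3).le,
        mul_nonneg (by linarith : (0:ℝ) ≤ L - 8) (sq_nonneg L)]
    calc (L + A * L ^ 2) * (2 * L) ≤ 8 * A * L ^ 3 := k1
      _ ≤ y := h4
      _ ≤ y * l ^ 3 := le_mul_of_one_le_right hy.le (one_le_pow₀ h1)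
      _ = l * (y * l ^ 2) := by ring
  linarith

/-- With `A = d^m` (`d ≥ 2`, `m ≥ 1`) and
`f(n) = log n/(n (log log n)²) + A (log n)²/(n (log log n)²)
  + ((n−λ(n))/n) · (log n / log((n−λ(n))/A)) · (log log((n−λ(n))/A)/log log n)²`,
there exists `N` such that `f(n) ≤ 1` for all `n ≥ N`. -/
theorem fg_lemma_lf (d m : ℕ) (hd : 2 ≤ d) (hm : 1 ≤ m) :
    ∃ N : ℕ, ∀ n : ℕ, N ≤ n →
      Real.log n / ((n : ℝ) * (Real.log (Real.log n)) ^ 2)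
        + (d : ℝ) ^ m * (Real.log n) ^ 2 / ((n : ℝ) * (Real.log (Real.log n)) ^ 2)
        + (((n : ℝ) - lamFG n) / n)
            * (Real.log n / Real.log (((n : ℝ) - lamFG n) / (d : ℝ) ^ m))
            * (Real.log (Real.log (((n : ℝ) - lamFG n) / (d : ℝ) ^ m))
                / Real.log (Real.log n)) ^ 2
      ≤ 1 := by
  have hA : (2:ℝ) ≤ (d:ℝ) ^ m := by
    calc (2:ℝ) = 2 ^ 1 := (pow_one 2).symm
      _ ≤ (2:ℝ) ^ m := pow_le_pow_right₀ (by norm_num) hm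
      _ ≤ (d:ℝ) ^ m := by
          apply pow_le_pow_left₀ (by norm_num)
          exact_mod_cast hd
  set A : ℝ := (d:ℝ) ^ m with hAdef
  have hA0 : (0:ℝ) < A := by linarith
  have hcast : Tendsto (fun n : ℕ => (n:ℝ)) atTop atTop := tendsto_natCast_atTop_atTop
  have hlog : Tendsto (fun n : ℕ => Real.log n) atTop atTop :=
    Real.tendsto_log_atTop.comp hcast
  have hllog : Tendsto (fun n : ℕ => Real.log (Real.log n)) atTop atTop :=
    Real.tendsto_log_atTop.comp hlog
  have E1 : ∀ᶠ n : ℕ in atTop, 1 ≤ Real.log (Real.log n) := hllog.eventually_ge_atTop 1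
  have E2 : ∀ᶠ n : ℕ in atTop, 4 * Real.log A ≤ Real.log (Real.log n) :=
    hllog.eventually_ge_atTop _
  have E3 : ∀ᶠ n : ℕ in atTop, Real.log (Real.log n) ≤ Real.log n / 8 := by
    have h := Real.isLittleO_log_id_atTop.def (show (0:ℝ) < 1/8 by norm_num)
    filter_upwards [hlog.eventually h, hlog.eventually_ge_atTop 0] with n h1 h2
    simp only [id, Real.norm_eq_abs] at h1
    calc Real.log (Real.log n) ≤ |Real.log (Real.log n)| := le_abs_self _
      _ ≤ 1/8 * |Real.log n| := h1
      _ = Real.log n / 8 := by rw [abs_of_nonneg h2]; ring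
  have E4 : ∀ᶠ n : ℕ in atTop, 8 * A * (Real.log n) ^ 3 ≤ (n:ℝ) := by
    have t := (Real.tendsto_pow_log_div_mul_add_atTop 1 0 3 one_ne_zero).comp hcast
    have t2 : ∀ᶠ n : ℕ in atTop, Real.log n ^ 3 / (1 * (n:ℝ) + 0) ≤ 1 / (8 * A) :=
      t.eventually_le_const (by positivity)
    filter_upwards [t2, hcast.eventually_gt_atTop 0] with n h1 h2
    have h1' : Real.log n ^ 3 / (n:ℝ) ≤ 1 / (8 * A) := by
      simpa using h1
    rw [div_le_div_iff₀ h2 (by positivity)] at h1'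
    nlinarith
  have Eall : ∀ᶠ n : ℕ in atTop,
      Real.log n / ((n : ℝ) * (Real.log (Real.log n)) ^ 2)
        + A * (Real.log n) ^ 2 / ((n : ℝ) * (Real.log (Real.log n)) ^ 2)
        + (((n : ℝ) - lamFG n) / n)
            * (Real.log n / Real.log (((n : ℝ) - lamFG n) / A))
            * (Real.log (Real.log (((n : ℝ) - lamFG n) / A))
                / Real.log (Real.log n)) ^ 2
      ≤ 1 := by
    filter_upwards [E1, E2, E3, E4] with n h1 h2 h3 h4
    exact fg_key A n hA h1 h2 h3 h4
  obtain ⟨N, hN⟩ := eventually_atTop.mp Eall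
  exact ⟨N, hN⟩
end

section
/- In the Fabrykowski–Gupta group G = ⟨a, t⟩ acting on the ternary rooted tree, the element a·t has infinite order; consequently G is not a torsion group. -/
/-- Action of the rooted automorphism `a` of the ternary tree `{0,1,2}^*`:
cyclic permutation `(0 1 2)` at the root. -/
def fgA : List (Fin 3) → List (Fin 3)
  | [] => []
  | x :: w => (x + 1) :: w

/-- Inverse of `fgA`. -/
def fgA' : List (Fin 3) → List (Fin 3)
  | [] => []
  | x :: w => (x + 2) :: w

/-- Action of the automorphism `t = ⟨a, 1, t⟩`. -/
def fgT : List (Fin 3) → List (Fin 3)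
  | [] => []
  | x :: w => if x = 0 then x :: fgA w else if x = 1 then x :: w else x :: fgT w

/-- Inverse of `fgT`. -/
def fgT' : List (Fin 3) → List (Fin 3)
  | [] => []
  | x :: w => if x = 0 then x :: fgA' w else if x = 1 then x :: w else x :: fgT' w

theorem fgA_left : Function.LeftInverse fgA' fgA := by
  intro w
  cases w with
  | nil => rfl
  | cons x w =>
    have h : ∀ y : Fin 3, y + 1 + 2 = y := by decide
    simp [fgA, fgA', h]

theorem fgA_right : Function.RightInverse fgA' fgA := by
  intro w
  cases w with
  | nil => rfl
  | cons x w =>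
    have h : ∀ y : Fin 3, y + 2 + 1 = y := by decide
    simp [fgA, fgA', h]

theorem fgT_left : Function.LeftInverse fgT' fgT := by
  intro w
  induction w with
  | nil => rfl
  | cons x w ih =>
    fin_cases x <;> simp [fgT, fgT', fgA_left _, ih]

theorem fgT_right : Function.RightInverse fgT' fgT := by
  intro w
  induction w with
  | nil => rfl
  | cons x w ih =>
    fin_cases x <;> simp [fgT, fgT', fgA_right _, ih]

/-- The rooted automorphism `a` as a permutation of `{0,1,2}^*`. -/
def fgAperm : Equiv.Perm (List (Fin 3)) := ⟨fgA, fgA', fgA_left, fgA_right⟩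

/-- The automorphism `t = ⟨a, 1, t⟩` as a permutation of `{0,1,2}^*`. -/
def fgTperm : Equiv.Perm (List (Fin 3)) := ⟨fgT, fgT', fgT_left, fgT_right⟩


/-- The composite action `w ↦ a (t w)`. -/
def fgS (w : List (Fin 3)) : List (Fin 3) := fgA (fgT w)

open Fin.NatCast in
lemma fgS_first (n : ℕ) : ∀ (x : Fin 3) (w : List (Fin 3)),
    ∃ w', fgS^[n] (x :: w) = (x + n) :: w' := by
  induction n with
  | zero => intro x w; exact ⟨w, by simp⟩
  | succ n ih =>
    intro x w
    have hstep : ∃ w', fgS (x :: w) = (x + 1) :: w' := by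
      fin_cases x <;> exact ⟨_, rfl⟩
    obtain ⟨w1, hw1⟩ := hstep
    obtain ⟨w2, hw2⟩ := ih (x + 1) w1
    refine ⟨w2, ?_⟩
    rw [Function.iterate_succ_apply, hw1, hw2]
    congr 1
    push_cast
    abel

lemma fgS_three (w : List (Fin 3)) : fgS^[3] ((1 : Fin 3) :: w) = 1 :: fgS w := by
  show fgS (fgS (fgS (1 :: w))) = _
  rfl

lemma fgS_three_mul (m : ℕ) : ∀ w, fgS^[3 * m] ((1 : Fin 3) :: w) = 1 :: fgS^[m] w := by
  induction m with
  | zero => intro w; simp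
  | succ m ih =>
    intro w
    have : 3 * (m + 1) = 3 * m + 3 := by ring
    rw [this, Function.iterate_add_apply, fgS_three, ih, ← Function.iterate_succ_apply]

open Fin.NatCast in
lemma fgS_iter_ne : ∀ n, 1 ≤ n → ∃ w, fgS^[n] w ≠ w := by
  intro n
  induction n using Nat.strong_induction_on with
  | _ n ih =>
    intro hn
    by_cases h3 : n % 3 = 0
    · obtain ⟨m, hm⟩ : ∃ m, n = 3 * m := ⟨n / 3, (Nat.div_mul_cancel (Nat.dvd_of_mod_eq_zero h3)).symm.trans (by ring)⟩
      have hm1 : 1 ≤ m := by omega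
      obtain ⟨w, hw⟩ := ih m (by omega) hm1
      refine ⟨(1 : Fin 3) :: w, ?_⟩
      rw [hm, fgS_three_mul]
      simpa using hw
    · obtain ⟨w', hw'⟩ := fgS_first n (0 : Fin 3) []
      refine ⟨[(0 : Fin 3)], ?_⟩
      rw [hw']
      intro h
      have := List.head_eq_of_cons_eq h
      have : ((n : Fin 3) : Fin 3) = 0 := by simpa using this
      have : (n : ℕ) % 3 = 0 := by
        have := congrArg Fin.val this
        simpa [Fin.val_natCast] using this
      exact h3 this

lemma fgS_pow (n : ℕ) (w : List (Fin 3)) :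
    ((fgAperm * fgTperm) ^ n) w = fgS^[n] w := by
  induction n with
  | zero => rfl
  | succ n ih =>
    rw [pow_succ', Equiv.Perm.mul_apply, Function.iterate_succ_apply', ih]
    rfl

/-- In the Fabrykowski–Gupta group `G = ⟨a, t⟩`, the element `a·t` has infinite
order; consequently `G` is not a torsion group. -/
theorem fg_not_torsion :
    ¬ IsOfFinOrder (fgAperm * fgTperm) ∧
    ¬ (∀ g ∈ Subgroup.closure ({fgAperm, fgTperm} : Set (Equiv.Perm (List (Fin 3)))),
        IsOfFinOrder g) := by
  have hkey : ¬ IsOfFinOrder (fgAperm * fgTperm) := by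
    rw [isOfFinOrder_iff_pow_eq_one]
    rintro ⟨n, hn, hpow⟩
    obtain ⟨w, hw⟩ := fgS_iter_ne n hn
    apply hw
    rw [← fgS_pow, hpow]
    rfl
  refine ⟨hkey, fun h => hkey ?_⟩
  exact h _ (mul_mem (Subgroup.subset_closure (by simp)) (Subgroup.subset_closure (by simp)))
end

section
/- Let ℓ be the word metric on the Fabrykowski–Gupta group G with weights ℓ(t^{±1}) = 1 and ℓ(a^{±1}) = 0. Then for every g ∈ G with first-level decomposition g = ⟨g₀, g₁, g₂⟩σ, one has ℓ(g₀) + ℓ(g₁) + ℓ(g₂) ≤ ℓ(g). -/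
/-- The word length on the Fabrykowski–Gupta group with weights
`ℓ(t^{±1}) = 1`, `ℓ(a^{±1}) = 0`: the minimum number of occurrences of `t^{±1}`
over all words in `{a^{±1}, t^{±1}}` representing `g`. -/
noncomputable def fgLen (g : Equiv.Perm (List (Fin 3))) : ℕ :=
  sInf {n : ℕ | ∃ L : List (Bool × Bool),
    (L.map fun p => if p.1 then (if p.2 then fgTperm else fgTperm⁻¹)
                    else (if p.2 then fgAperm else fgAperm⁻¹)).prod = g ∧
    L.countP (fun p => p.1) = n}

/-- A letter as a permutation. -/
def fgF (p : Bool × Bool) : Equiv.Perm (List (Fin 3)) :=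
  if p.1 then (if p.2 then fgTperm else fgTperm⁻¹)
  else (if p.2 then fgAperm else fgAperm⁻¹)

/-- Evaluation of a word. -/
def fgVal (L : List (Bool × Bool)) : Equiv.Perm (List (Fin 3)) := (L.map fgF).prod

/-- t-count of a word. -/
def fgCnt (L : List (Bool × Bool)) : ℕ := L.countP (fun p => p.1)

/-- cyclic permutation of Fin 3. -/
def c3 : Equiv.Perm (Fin 3) := ⟨fun x => x + 1, fun x => x + 2, by decide, by decide⟩

/-- Root permutation of a letter. -/
def fgTau (p : Bool × Bool) : Equiv.Perm (Fin 3) :=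
  if p.1 then 1 else (if p.2 then c3 else c3⁻¹)

/-- Sections of a letter. -/
def fgSec (p : Bool × Bool) (x : Fin 3) : List (Bool × Bool) :=
  if p.1 then (if x = 0 then [(false, p.2)] else if x = 2 then [(true, p.2)] else []) else []

lemma fg_letter_decomp (p : Bool × Bool) (x : Fin 3) (w : List (Fin 3)) :
    fgF p (x :: w) = fgTau p x :: fgVal (fgSec p x) w := by
  obtain ⟨b1, b2⟩ := p
  cases b1 <;> cases b2 <;> fin_cases x <;>
    simp [fgF, fgTau, fgSec, fgVal, fgAperm, fgTperm, Equiv.Perm.inv_def, Equiv.coe_fn_symm_mk,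
      fgA, fgA', fgT, fgT', c3]

lemma fg_sec_cnt (p : Bool × Bool) :
    (∑ x : Fin 3, fgCnt (fgSec p x)) = fgCnt [p] := by
  obtain ⟨b1, b2⟩ := p
  cases b1 <;> cases b2 <;> decide

lemma fg_main_decomp (W : List (Bool × Bool)) :
    ∃ (τ : Equiv.Perm (Fin 3)) (S : Fin 3 → List (Bool × Bool)),
      (∀ x w, fgVal W (x :: w) = τ x :: fgVal (S x) w) ∧
      (∑ x : Fin 3, fgCnt (S x)) = fgCnt W := by
  induction W with
  | nil =>
    refine ⟨1, fun _ => [], fun x w => rfl, by simp [fgCnt]⟩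
  | cons p W ih =>
    obtain ⟨τ, S, hS, hc⟩ := ih
    refine ⟨fgTau p * τ, fun x => fgSec p (τ x) ++ S x, ?_, ?_⟩
    · intro x w
      have h1 : fgVal (p :: W) (x :: w) = fgF p (fgVal W (x :: w)) := by
        simp [fgVal, Equiv.Perm.mul_apply]
      rw [h1, hS, fg_letter_decomp]
      simp [fgVal, Equiv.Perm.mul_apply, List.map_append, List.prod_append]
    · have h1 : ∀ x : Fin 3, fgCnt (fgSec p (τ x) ++ S x)
          = fgCnt (fgSec p (τ x)) + fgCnt (S x) := by
        intro x; simp [fgCnt, List.countP_append]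
      calc (∑ x : Fin 3, fgCnt (fgSec p (τ x) ++ S x))
          = (∑ x : Fin 3, fgCnt (fgSec p (τ x))) + ∑ x : Fin 3, fgCnt (S x) := by
            simp only [h1]; rw [Finset.sum_add_distrib]
        _ = fgCnt [p] + fgCnt W := by
            rw [hc, Equiv.sum_comp τ (fun y => fgCnt (fgSec p y)), fg_sec_cnt]
        _ = fgCnt (p :: W) := by
            simp [fgCnt, List.countP_cons]; omega

lemma fgF_flip (p : Bool × Bool) : fgF (p.1, !p.2) = (fgF p)⁻¹ := by
  obtain ⟨b1, b2⟩ := p; cases b1 <;> cases b2 <;> simp [fgF]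

lemma fgVal_inv (L : List (Bool × Bool)) :
    fgVal (L.reverse.map fun p => (p.1, !p.2)) = (fgVal L)⁻¹ := by
  induction L with
  | nil => simp [fgVal]
  | cons p L ih =>
    have h1 : (p :: L).reverse.map (fun p : Bool × Bool => (p.1, !p.2))
        = (L.reverse.map fun p => (p.1, !p.2)) ++ [(p.1, !p.2)] := by
      simp
    rw [h1]
    have h2 : fgVal ((L.reverse.map fun p => (p.1, !p.2)) ++ [(p.1, !p.2)])
        = fgVal (L.reverse.map fun p => (p.1, !p.2)) * fgF (p.1, !p.2) := by
      simp [fgVal, List.map_append, List.prod_append]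
    rw [h2, ih, fgF_flip]
    have h3 : fgVal (p :: L) = fgF p * fgVal L := by simp [fgVal]
    rw [h3, mul_inv_rev]

lemma fg_exists_word (g : Equiv.Perm (List (Fin 3)))
    (hg : g ∈ Subgroup.closure ({fgAperm, fgTperm} : Set (Equiv.Perm (List (Fin 3))))) :
    ∃ L, fgVal L = g := by
  induction hg using Subgroup.closure_induction with
  | mem x hx =>
    rcases hx with h | h
    · exact ⟨[(false, true)], by simp [fgVal, fgF, h]⟩
    · exact ⟨[(true, true)], by simp [fgVal, fgF, Set.mem_singleton_iff.mp h]⟩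
  | one => exact ⟨[], rfl⟩
  | mul x y _ _ hx hy =>
    obtain ⟨L1, h1⟩ := hx; obtain ⟨L2, h2⟩ := hy
    exact ⟨L1 ++ L2, by unfold fgVal at *; simp [List.map_append, List.prod_append, h1, h2]⟩
  | inv x _ hx =>
    obtain ⟨L, h1⟩ := hx
    exact ⟨L.reverse.map fun p => (p.1, !p.2), by rw [fgVal_inv, h1]⟩

lemma fgLen_eq (g : Equiv.Perm (List (Fin 3))) :
    fgLen g = sInf {n : ℕ | ∃ L : List (Bool × Bool), fgVal L = g ∧ fgCnt L = n} := rfl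

/-- For every `g` in the Fabrykowski–Gupta group with first-level decomposition
`g = ⟨g₀, g₁, g₂⟩σ`, one has `ℓ(g₀) + ℓ(g₁) + ℓ(g₂) ≤ ℓ(g)`. -/
theorem fg_states_length_le
    (g : Equiv.Perm (List (Fin 3)))
    (hg : g ∈ Subgroup.closure ({fgAperm, fgTperm} : Set (Equiv.Perm (List (Fin 3)))))
    (σ : Equiv.Perm (Fin 3)) (gs : Fin 3 → Equiv.Perm (List (Fin 3)))
    (hdec : ∀ (x : Fin 3) (w : List (Fin 3)), g (x :: w) = σ x :: gs x w) :
    fgLen (gs 0) + fgLen (gs 1) + fgLen (gs 2) ≤ fgLen g := by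
  obtain ⟨L, hL⟩ := fg_exists_word g hg
  have hne : {n : ℕ | ∃ L : List (Bool × Bool), fgVal L = g ∧ fgCnt L = n}.Nonempty :=
    ⟨fgCnt L, L, hL, rfl⟩
  have hmem := Nat.sInf_mem hne
  rw [← fgLen_eq] at hmem
  obtain ⟨L', hL', hcnt⟩ := hmem
  obtain ⟨τ, S, hS, hc⟩ := fg_main_decomp L'
  have hgs : ∀ x : Fin 3, gs x = fgVal (S x) := by
    intro x
    refine Equiv.ext fun w => ?_
    have h1 : σ x :: gs x w = τ x :: fgVal (S x) w := by
      rw [← hdec x w, ← hL', hS]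
    exact (List.cons.injEq _ _ _ _ ▸ h1).2
  have hle : ∀ x : Fin 3, fgLen (gs x) ≤ fgCnt (S x) := by
    intro x
    rw [hgs x, fgLen_eq]
    exact Nat.sInf_le ⟨S x, rfl, rfl⟩
  calc fgLen (gs 0) + fgLen (gs 1) + fgLen (gs 2)
      ≤ fgCnt (S 0) + fgCnt (S 1) + fgCnt (S 2) := by
        have := hle 0; have := hle 1; have := hle 2; omega
    _ = ∑ x : Fin 3, fgCnt (S x) := by rw [Fin.sum_univ_three]
    _ = fgCnt L' := hc
    _ = fgLen g := hcnt
end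

section
/- If G is a group admitting a short exact sequence 1 → N → G → P → 1 with N locally nilpotent and P periodic, then G contains no free subsemigroup of rank 2: for any x, y ∈ G, the subsemigroup generated by x and y is not free of rank 2. -/
/-- Malcev word pair: `MW a b 0 = (a, b)`, and at each step `(p, q) ↦ (p*q, q*p)`. -/
def MW {G : Type*} [Group G] (a b : G) : ℕ → G × G
  | 0 => (a, b)
  | k + 1 => ((MW a b k).1 * (MW a b k).2, (MW a b k).2 * (MW a b k).1)

theorem MW_map {G H : Type*} [Group G] [Group H] (f : G →* H) (a b : G) :
    ∀ k, MW (f a) (f b) k = ((f (MW a b k).1), (f (MW a b k).2)) := by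
  intro k
  induction k with
  | zero => rfl
  | succ k ih => simp [MW, ih]

/-- In a group nilpotent of class `≤ n`, the two Malcev words of level `n` agree. -/
theorem MW_eq_of_ucs {n : ℕ} : ∀ {G : Type*} [Group G],
    Subgroup.upperCentralSeries G n = ⊤ → ∀ a b : G, (MW a b n).1 = (MW a b n).2 := by
  induction n with
  | zero =>
    intro G _ h a b
    have ha : a ∈ (⊥ : Subgroup G) := by
      rw [← upperCentralSeries_zero (G := G), h]; trivial
    have hb : b ∈ (⊥ : Subgroup G) := by
      rw [← upperCentralSeries_zero (G := G), h]; trivial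
    simp only [Subgroup.mem_bot] at ha hb
    simp [MW, ha, hb]
  | succ n ih =>
    intro G _ h a b
    have hQ : Subgroup.upperCentralSeries (G ⧸ Subgroup.center G) n = ⊤ := by
      have := comap_upperCentralSeries_quotient_center (G := G) n
      rw [h] at this
      have hs : Function.Surjective (QuotientGroup.mk' (Subgroup.center G)) :=
        QuotientGroup.mk_surjective
      apply Subgroup.comap_injective hs
      rw [this, Subgroup.comap_top]
    have hq := ih hQ (QuotientGroup.mk' (Subgroup.center G) a)
      (QuotientGroup.mk' (Subgroup.center G) b)
    rw [MW_map] at hq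
    set p := MW a b n with hp
    have hz : (p.1)⁻¹ * p.2 ∈ Subgroup.center G := by
      have : (QuotientGroup.mk p.1 : G ⧸ Subgroup.center G) = QuotientGroup.mk p.2 := hq
      exact (QuotientGroup.eq).mp this
    have hcomm := Subgroup.mem_center_iff.mp hz
    have h2 : p.2 = p.1 * ((p.1)⁻¹ * p.2) := by group
    show p.1 * p.2 = p.2 * p.1
    rw [h2, mul_assoc p.1 ((p.1)⁻¹ * p.2) p.1, ← hcomm p.1]

/-- Word version of the Malcev pair, with base letters repeated `n` times. -/
def WP (n : ℕ) : ℕ → List Bool × List Bool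
  | 0 => (List.replicate n true, List.replicate n false)
  | k + 1 => ((WP n k).1 ++ (WP n k).2, (WP n k).2 ++ (WP n k).1)

theorem WP_prod {G : Type*} [Group G] (x y : G) (n : ℕ) :
    ∀ k, (((WP n k).1.map fun b => if b then x else y).prod,
          ((WP n k).2.map fun b => if b then x else y).prod) = MW (x ^ n) (y ^ n) k := by
  intro k
  induction k with
  | zero =>
    simp [WP, MW, List.map_replicate, List.prod_replicate]
  | succ k ih =>
    simp only [WP, MW, List.map_append, List.prod_append, ← ih]

theorem WP_head (n : ℕ) (hn : n ≠ 0) :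
    ∀ k, (∃ l, (WP n k).1 = true :: l) ∧ (∃ l, (WP n k).2 = false :: l) := by
  intro k
  induction k with
  | zero =>
    obtain ⟨m, rfl⟩ := Nat.exists_eq_succ_of_ne_zero hn
    exact ⟨⟨List.replicate m true, rfl⟩, ⟨List.replicate m false, rfl⟩⟩
  | succ k ih =>
    obtain ⟨⟨l₁, h₁⟩, ⟨l₂, h₂⟩⟩ := ih
    exact ⟨⟨l₁ ++ (WP n k).2, by simp [WP, h₁]⟩, ⟨l₂ ++ (WP n k).1, by simp [WP, h₂]⟩⟩

/-- If `G` is an extension of a locally nilpotent group by a periodic group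
(there is a surjection `π : G → P` onto a periodic group whose kernel is locally
nilpotent), then `G` contains no free subsemigroup of rank 2: for all `x, y ∈ G`,
the subsemigroup generated by `x` and `y` is not free on `x, y`. -/
theorem no_free_subsemigroup_of_locally_nilpotent_by_periodic
    {G : Type u} [Group G] (P : Type v) [Group P] (π : G →* P)
    (hsurj : Function.Surjective π)
    (hker : ∀ H : Subgroup G, H ≤ π.ker → Group.FG H → Group.IsNilpotent H)
    (hper : ∀ p : P, IsOfFinOrder p) :
    ∀ x y : G,
      ¬ (∀ w₁ w₂ : List Bool, w₁ ≠ [] → w₂ ≠ [] →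
          (w₁.map fun b => if b then x else y).prod
            = (w₂.map fun b => if b then x else y).prod → w₁ = w₂) := by
  intro x y hfree
  -- choose n with x^n, y^n in the kernel
  set n := orderOf (π x) * orderOf (π y) with hn
  have hnx : orderOf (π x) ≠ 0 := (hper (π x)).orderOf_pos.ne'
  have hny : orderOf (π y) ≠ 0 := (hper (π y)).orderOf_pos.ne'
  have hn0 : n ≠ 0 := mul_ne_zero hnx hny
  have hxk : x ^ n ∈ π.ker := by
    rw [MonoidHom.mem_ker, map_pow, hn, pow_mul, pow_orderOf_eq_one, one_pow]
  have hyk : y ^ n ∈ π.ker := by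
    rw [MonoidHom.mem_ker, map_pow, hn, mul_comm, pow_mul, pow_orderOf_eq_one, one_pow]
  -- the subgroup generated by x^n, y^n is nilpotent
  set H : Subgroup G := Subgroup.closure {x ^ n, y ^ n} with hH
  have hHle : H ≤ π.ker := by
    rw [hH, Subgroup.closure_le]
    intro g hg
    rcases hg with rfl | rfl
    · exact hxk
    · exact hyk
  have hHfg : Group.FG H := by
    have : Finite ({x ^ n, y ^ n} : Set G) := Set.Finite.to_subtype (Set.toFinite _)
    exact Group.closure_finite_fg _
  obtain ⟨c, hc⟩ := (hker H hHle hHfg).nilpotent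
  -- the Malcev words agree in H, hence in G
  have hxm : x ^ n ∈ H := Subgroup.subset_closure (by simp)
  have hym : y ^ n ∈ H := Subgroup.subset_closure (by simp)
  have heq : (MW (x ^ n) (y ^ n) c).1 = (MW (x ^ n) (y ^ n) c).2 := by
    have h0 := MW_eq_of_ucs hc (⟨x ^ n, hxm⟩ : H) (⟨y ^ n, hym⟩ : H)
    have h3 := MW_map H.subtype (⟨x ^ n, hxm⟩ : H) (⟨y ^ n, hym⟩ : H) c
    rw [show (x ^ n) = H.subtype ⟨x ^ n, hxm⟩ from rfl,
        show (y ^ n) = H.subtype ⟨y ^ n, hym⟩ from rfl, h3]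
    exact congrArg H.subtype h0
  -- now get the word contradiction
  obtain ⟨⟨l₁, h₁⟩, ⟨l₂, h₂⟩⟩ := WP_head n hn0 c
  have hw := WP_prod x y n c
  have hprod : ((WP n c).1.map fun b => if b then x else y).prod
      = ((WP n c).2.map fun b => if b then x else y).prod := by
    have e1 := congrArg Prod.fst hw
    have e2 := congrArg Prod.snd hw
    simp only at e1 e2
    rw [e1, e2, heq]
  have := hfree (WP n c).1 (WP n c).2 (by rw [h₁]; simp) (by rw [h₂]; simp) hprod
  rw [h₁, h₂] at this
  simp at this
end
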